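/- Minimal implicational natural deduction is incomplete with respect to minimal propositional logic under the standard ⊥-translation of conjunction: for distinct propositional variables p and q, the formula (p ∧ q) → p is a theorem of Prawitz's natural deduction system for minimal propositional logic, yet its implicational translation ((p → (q → ⊥)) → ⊥) → p (obtained by expressing p ∧ q as (p → (q → ⊥)) → ⊥) is not a theorem of minimal implicational natural deduction. -/
import Mathlib


/-- Formulas of minimal implicational logic: propositional variables,
the atomic constant ⊥ (no inference rules), and implication. -/
inductive IForm : Type
  | var : ℕ → IForm
  | bot : IForm
  | imp : IForm → IForm → IForm
deriving DecidableEq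

/-- Minimal implicational natural deduction. -/
inductive IDeriv : Set IForm → IForm → Prop
  | ax {Γ : Set IForm} {φ : IForm} : φ ∈ Γ → IDeriv Γ φ
  | impI {Γ : Set IForm} {α β : IForm} :
      IDeriv (insert α Γ) β → IDeriv Γ (IForm.imp α β)
  | impE {Γ : Set IForm} {α β : IForm} :
      IDeriv Γ α → IDeriv Γ (IForm.imp α β) → IDeriv Γ β

/-- Boolean evaluation of an implicational formula under a valuation `v` of
the propositional variables and a Boolean value `b` for the atom ⊥. -/
def IForm.eval (v : ℕ → Bool) (b : Bool) : IForm → Bool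
  | IForm.var n => v n
  | IForm.bot => b
  | IForm.imp α β => !(α.eval v b) || (β.eval v b)

/-- Formulas of minimal propositional logic. -/
inductive PForm : Type
  | var : ℕ → PForm
  | bot : PForm
  | conj : PForm → PForm → PForm
  | disj : PForm → PForm → PForm
  | imp : PForm → PForm → PForm
deriving DecidableEq

/-- Prawitz's natural deduction system for minimal propositional logic. -/
inductive PDeriv : Set PForm → PForm → Prop
  | ax {Γ : Set PForm} {φ : PForm} : φ ∈ Γ → PDeriv Γ φ
  | impI {Γ : Set PForm} {α β : PForm} :
      PDeriv (insert α Γ) β → PDeriv Γ (PForm.imp α β)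
  | impE {Γ : Set PForm} {α β : PForm} :
      PDeriv Γ α → PDeriv Γ (PForm.imp α β) → PDeriv Γ β
  | andI {Γ : Set PForm} {α β : PForm} :
      PDeriv Γ α → PDeriv Γ β → PDeriv Γ (PForm.conj α β)
  | andE₁ {Γ : Set PForm} {α β : PForm} :
      PDeriv Γ (PForm.conj α β) → PDeriv Γ α
  | andE₂ {Γ : Set PForm} {α β : PForm} :
      PDeriv Γ (PForm.conj α β) → PDeriv Γ β
  | orI₁ {Γ : Set PForm} {α β : PForm} :
      PDeriv Γ α → PDeriv Γ (PForm.disj α β)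
  | orI₂ {Γ : Set PForm} {α β : PForm} :
      PDeriv Γ β → PDeriv Γ (PForm.disj α β)
  | orE {Γ : Set PForm} {α β γ : PForm} :
      PDeriv Γ (PForm.disj α β) → PDeriv (insert α Γ) γ →
      PDeriv (insert β Γ) γ → PDeriv Γ γ

lemma IDeriv.sound {Γ : Set IForm} {φ : IForm} (h : IDeriv Γ φ) (v : ℕ → Bool) (b : Bool)
    (hΓ : ∀ ψ ∈ Γ, ψ.eval v b = true) : φ.eval v b = true := by
  induction h with
  | ax hmem => exact hΓ _ hmem
  | impI _ ih =>
    rename_i α β _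
    simp only [IForm.eval, Bool.or_eq_true, Bool.not_eq_true']
    by_cases hα : IForm.eval v b α = true
    · exact Or.inr (ih (by rintro ψ (rfl | hψ); exact hα; exact hΓ _ hψ))
    · exact Or.inl (by simpa using hα)
  | impE _ _ ih1 ih2 =>
    have := ih2 hΓ
    simp only [IForm.eval, Bool.or_eq_true, Bool.not_eq_true'] at this
    rcases this with h' | h'
    · rw [ih1 hΓ] at h'; cases h'
    · exact h'

/-- (p ∧ q) → p is a theorem of minimal propositional logic,
yet its ⊥-translation ((p → (q → ⊥)) → ⊥) → p is not a theorem of minimal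
implicational natural deduction, for distinct variables p and q. -/
theorem implicational_incomplete (p q : ℕ) (hpq : p ≠ q) :
    PDeriv ∅ (PForm.imp (PForm.conj (PForm.var p) (PForm.var q)) (PForm.var p))
    ∧ ¬ IDeriv ∅
        (IForm.imp
          (IForm.imp (IForm.imp (IForm.var p) (IForm.imp (IForm.var q) IForm.bot))
            IForm.bot)
          (IForm.var p)) := by
  constructor
  · exact PDeriv.impI (PDeriv.andE₁ (PDeriv.ax (Set.mem_insert _ _)))
  · intro h
    have := h.sound (fun n => if n = p then false else true) true (by simp)
    simp [IForm.eval, hpq] at this
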